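/- For every n ≥ 2, the generalized Motzkin polynomial M_n is nonnegative on all of ℝⁿ, i.e., M_n(x) ≥ 0 for every x ∈ ℝⁿ. -/

import Mathlib

open MvPolynomial Finset

noncomputable section

/-- The all-ones exponent vector `e = (1,…,1)`. -/
def eAll (n : ℕ) : Fin n →₀ ℕ := Finsupp.equivFunOnFinite.symm (fun _ => 1)

/-- The exponent vector `2(e + e_j)`. -/
def expMotz (n : ℕ) (j : Fin n) : Fin n →₀ ℕ :=
  Finsupp.equivFunOnFinite.symm (fun i => if i = j then 4 else 2)

/-- The exponent vector `2e = (2,…,2)`. -/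
def twoE (n : ℕ) : Fin n →₀ ℕ := Finsupp.equivFunOnFinite.symm (fun _ => 2)

/-- The generalized Motzkin polynomial
`M_n = 1 + Σ_{j=1}^n x^{2(e+e_j)} − (n+1)·x^{2e}`. -/
def Motzkin (n : ℕ) : MvPolynomial (Fin n) ℝ :=
  1 + (∑ j : Fin n, monomial (expMotz n j) (1 : ℝ)) - monomial (twoE n) ((n : ℝ) + 1)

/-- The signed quadric `N_n = (1 − Σ_{j=1}^n x_j)²`. -/
def SignedQuadric (n : ℕ) : MvPolynomial (Fin n) ℝ :=
  (1 - ∑ j : Fin n, X j) ^ 2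

/-- `f` is a circuit polynomial. -/
def IsCircuit {n : ℕ} (f : MvPolynomial (Fin n) ℝ) : Prop :=
  (∃ (w : Fin n →₀ ℕ) (c : ℝ), 0 ≤ c ∧ f = monomial (2 • w) c) ∨
  (∃ r : ℕ, r ≤ n ∧ ∃ (α : Fin (r + 1) → (Fin n →₀ ℕ)) (c : Fin (r + 1) → ℝ)
      (β : Fin n →₀ ℕ) (fβ : ℝ) (lam : Fin (r + 1) → ℝ),
    (∀ j, 0 < c j) ∧
    (∀ j i, Even (α j i)) ∧
    AffineIndependent ℝ (fun j => (fun i => (α j i : ℝ))) ∧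
    (∀ j, 0 < lam j) ∧ (∑ j, lam j) = 1 ∧
    (∀ i, (β i : ℝ) = ∑ j, lam j * (α j i : ℝ)) ∧
    f = monomial β fβ + ∑ j, monomial (α j) (c j))

/-- `f` is a nonnegative circuit polynomial. -/
def IsNonnegCircuit {n : ℕ} (f : MvPolynomial (Fin n) ℝ) : Prop :=
  IsCircuit f ∧ ∀ x : Fin n → ℝ, 0 ≤ eval x f

/-- The set of sums of nonnegative circuit polynomials. -/
def SONCset (n : ℕ) : Set (MvPolynomial (Fin n) ℝ) :=
  {f | ∃ (k : ℕ) (μ : Fin k → ℝ) (p : Fin k → MvPolynomial (Fin n) ℝ),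
    (∀ i, 0 ≤ μ i) ∧ (∀ i, IsNonnegCircuit (p i)) ∧ f = ∑ i, μ i • p i}

/-- The set of sums of squares. -/
def SOSset (n : ℕ) : Set (MvPolynomial (Fin n) ℝ) :=
  {f | ∃ (k : ℕ) (p : Fin k → MvPolynomial (Fin n) ℝ), f = ∑ i, (p i) ^ 2}

/-- The set of sums of squares of binomials (SDSOS). -/
def SDSOSset (n : ℕ) : Set (MvPolynomial (Fin n) ℝ) :=
  {f | ∃ (k : ℕ) (a b : Fin k → ℝ) (u v : Fin k → (Fin n →₀ ℕ)),
    f = ∑ i, (monomial (u i) (a i) + monomial (v i) (b i)) ^ 2}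

/-- The Sherali-Adams set: nonnegative combinations of `x_I · x̄_J`. -/
def SAset (n : ℕ) : Set (MvPolynomial (Fin n) ℝ) :=
  {f | ∃ α : Finset (Fin n) × Finset (Fin n) → ℝ, (∀ p, 0 ≤ α p) ∧
    f = ∑ p : Finset (Fin n) × Finset (Fin n),
      α p • ((∏ i ∈ p.1, X i) * ∏ j ∈ p.2, (1 - X j))}

/-- The preprime generated by a finite constraint set. -/
def preprime {n : ℕ} (G : Finset (MvPolynomial (Fin n) ℝ)) :
    Set (MvPolynomial (Fin n) ℝ) :=
  {p | ∃ (k : ℕ) (cc : Fin k → ℝ) (e : Fin k → MvPolynomial (Fin n) ℝ → ℕ),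
    (∀ i, 0 ≤ cc i) ∧ p = ∑ i, cc i • ∏ g ∈ G, g ^ (e i g)}

/-- The feasibility set `𝒢₊` of a constraint set. -/
def feasSet {n : ℕ} (G : Finset (MvPolynomial (Fin n) ℝ)) : Set (Fin n → ℝ) :=
  {x | ∀ g ∈ G, 0 ≤ eval x g}

/-- The Boolean hypercube `{0,1}ⁿ ⊆ ℝⁿ`. -/
def Hypercube (n : ℕ) : Set (Fin n → ℝ) := {x | ∀ i, x i = 0 ∨ x i = 1}

/-- The degree-`D` Putinar-type hierarchy `H(GEN, 𝒢, D)`. -/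
def HPut {n : ℕ} (GEN : Set (MvPolynomial (Fin n) ℝ))
    (G : Finset (MvPolynomial (Fin n) ℝ)) (D : ℕ) : Set (MvPolynomial (Fin n) ℝ) :=
  {f | ∃ (k : ℕ) (s g : Fin k → MvPolynomial (Fin n) ℝ),
    (∀ i, s i ∈ GEN) ∧ (∀ i, g i ∈ G) ∧
    (∀ i, (s i * g i).totalDegree ≤ D) ∧ f = ∑ i, s i * g i}

/-- The degree-`D` Schmüdgen-type hierarchy `H*(GEN, 𝒢, D)`. -/
def HSch {n : ℕ} (GEN : Set (MvPolynomial (Fin n) ℝ))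
    (G : Finset (MvPolynomial (Fin n) ℝ)) (D : ℕ) : Set (MvPolynomial (Fin n) ℝ) :=
  {f | ∃ (k : ℕ) (s g : Fin k → MvPolynomial (Fin n) ℝ),
    (∀ i, s i ∈ GEN) ∧ (∀ i, g i ∈ preprime G) ∧
    (∀ i, (s i * g i).totalDegree ≤ D) ∧ f = ∑ i, s i * g i}

/-- `bound(f, GEN, 𝒢, D)` for the Putinar-type hierarchy, valued in `EReal`. -/
def boundPut {n : ℕ} (f : MvPolynomial (Fin n) ℝ) (GEN : Set (MvPolynomial (Fin n) ℝ))
    (G : Finset (MvPolynomial (Fin n) ℝ)) (D : ℕ) : EReal :=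
  sSup {x : EReal | ∃ lam : ℝ, x = (lam : EReal) ∧ f - C lam ∈ HPut GEN G D}

/-- `boundSch(f, GEN, 𝒢, D)` for the Schmüdgen-type hierarchy, valued in `EReal`. -/
def boundSch {n : ℕ} (f : MvPolynomial (Fin n) ℝ) (GEN : Set (MvPolynomial (Fin n) ℝ))
    (G : Finset (MvPolynomial (Fin n) ℝ)) (D : ℕ) : EReal :=
  sSup {x : EReal | ∃ lam : ℝ, x = (lam : EReal) ∧ f - C lam ∈ HSch GEN G D}

/-- Putinar-type Sherali-Adams hierarchy with the SA degree convention
`deg p_i ≤ ⌊(D − deg g_i)/2⌋`, encoded as `2·deg p_i + deg g_i ≤ D`. -/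
def HPutSA {n : ℕ} (G : Finset (MvPolynomial (Fin n) ℝ)) (D : ℕ) :
    Set (MvPolynomial (Fin n) ℝ) :=
  {f | ∃ (k : ℕ) (p g : Fin k → MvPolynomial (Fin n) ℝ),
    (∀ i, p i ∈ SAset n) ∧ (∀ i, g i ∈ G) ∧
    (∀ i, 2 * (p i).totalDegree + (g i).totalDegree ≤ D) ∧ f = ∑ i, p i * g i}

/-- Schmüdgen-type Sherali-Adams hierarchy with the SA degree convention. -/
def HSchSA {n : ℕ} (G : Finset (MvPolynomial (Fin n) ℝ)) (D : ℕ) :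
    Set (MvPolynomial (Fin n) ℝ) :=
  {f | ∃ (k : ℕ) (p g : Fin k → MvPolynomial (Fin n) ℝ),
    (∀ i, p i ∈ SAset n) ∧ (∀ i, g i ∈ preprime G) ∧
    (∀ i, 2 * (p i).totalDegree + (g i).totalDegree ≤ D) ∧ f = ∑ i, p i * g i}

/-- `bound(f, 𝕊𝔸, 𝒢, D)`. -/
def boundPutSA {n : ℕ} (f : MvPolynomial (Fin n) ℝ)
    (G : Finset (MvPolynomial (Fin n) ℝ)) (D : ℕ) : EReal :=
  sSup {x : EReal | ∃ lam : ℝ, x = (lam : EReal) ∧ f - C lam ∈ HPutSA G D}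

/-- `boundSch(f, 𝕊𝔸, 𝒢, D)`. -/
def boundSchSA {n : ℕ} (f : MvPolynomial (Fin n) ℝ)
    (G : Finset (MvPolynomial (Fin n) ℝ)) (D : ℕ) : EReal :=
  sSup {x : EReal | ∃ lam : ℝ, x = (lam : EReal) ∧ f - C lam ∈ HSchSA G D}

end


private theorem motzkin_key (n : ℕ) (y : Fin n → ℝ) (hy : ∀ i, 0 ≤ y i) :
    ((n : ℝ) + 1) * (∏ i, y i) ≤ 1 + ∑ j, y j * ∏ i, y i := by
  set P : ℝ := ∏ i, y i with hP
  have hPnn : 0 ≤ P := Finset.prod_nonneg fun i _ => hy i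
  set z : Fin (n + 1) → ℝ := Fin.cases 1 (fun j => y j * P) with hz
  have hznn : ∀ i ∈ Finset.univ, 0 ≤ z i := by
    intro i _
    induction i using Fin.cases with
    | zero => simp [hz]
    | succ j => simp only [hz, Fin.cases_succ]; exact mul_nonneg (hy j) hPnn
  have hw : ∀ i ∈ (Finset.univ : Finset (Fin (n+1))), 0 ≤ (1 : ℝ) / (n + 1) := by
    intro i _; positivity
  have hw' : ∑ _i : Fin (n + 1), (1 : ℝ) / (n + 1) = 1 := by
    rw [Finset.sum_const, Finset.card_univ, Fintype.card_fin, nsmul_eq_mul]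
    push_cast
    field_simp
  have amgm := Real.geom_mean_le_arith_mean_weighted Finset.univ
    (fun _ => (1 : ℝ) / (n + 1)) z hw hw' hznn
  have hprod : ∏ i : Fin (n + 1), z i = P ^ (n + 1) := by
    rw [Fin.prod_univ_succ]
    simp only [hz, Fin.cases_zero, Fin.cases_succ, one_mul]
    rw [Finset.prod_mul_distrib, Finset.prod_const, ← hP, Finset.card_univ,
      Fintype.card_fin]
    ring
  have hlhs : ∏ i : Fin (n + 1), z i ^ ((1 : ℝ) / (n + 1)) = P := by
    rw [Real.finset_prod_rpow _ _ (fun i _ => hznn i (Finset.mem_univ i)), hprod,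
      ← Real.rpow_natCast P (n + 1), ← Real.rpow_mul hPnn]
    push_cast
    rw [mul_one_div, div_self (by positivity), Real.rpow_one]
  have hrhs : ∑ i : Fin (n + 1), (1 : ℝ) / (n + 1) * z i
      = (1 + ∑ j, y j * P) / (n + 1) := by
    rw [← Finset.mul_sum, Fin.sum_univ_succ]
    simp only [hz, Fin.cases_zero, Fin.cases_succ]
    ring
  rw [hlhs, hrhs] at amgm
  have hn1 : (0 : ℝ) < (n : ℝ) + 1 := by positivity
  rw [le_div_iff₀ hn1] at amgm
  linarith [amgm]

private theorem motzkin_eval (n : ℕ) (x : Fin n → ℝ) :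
    MvPolynomial.eval x (Motzkin n)
      = 1 + (∑ j, (x j)^2 * ∏ i, (x i)^2) - ((n:ℝ)+1) * ∏ i, (x i)^2 := by
  have hm : ∀ j : Fin n, (∏ i, x i ^ (if i = j then 4 else 2)) = (x j)^2 * ∏ i, (x i)^2 := by
    intro j
    rw [show (fun i => x i ^ (if i = j then 4 else 2))
        = fun i => (if i = j then x i ^ 2 else 1) * x i ^ 2 by
      funext i; by_cases h : i = j <;> simp [h] <;> ring]
    rw [Finset.prod_mul_distrib, Finset.prod_ite_eq' Finset.univ j (fun i => x i ^ 2)]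
    simp
  simp only [Motzkin, map_sub, map_add, map_sum, map_one, eval_monomial,
    Finsupp.prod_fintype _ _ (fun i => pow_zero (x i)), expMotz, twoE,
    Finsupp.coe_equivFunOnFinite_symm, one_mul]
  rw [Finset.sum_congr rfl (fun j _ => hm j)]
  ring

/-- For every `n ≥ 2`, the generalized Motzkin polynomial `M_n`
is nonnegative on all of `ℝⁿ`. -/
theorem motzkin_nonneg (n : ℕ) (hn : 2 ≤ n) (x : Fin n → ℝ) :
    0 ≤ MvPolynomial.eval x (Motzkin n) := by
  rw [motzkin_eval]
  have := motzkin_key n (fun i => (x i)^2) (fun i => sq_nonneg (x i))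
  linarith
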